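/- arXiv:2605.28470 — 2 statements merged into one kernel-verified Lean document; each statement's English description precedes it below -/
import Mathlib

section
/- The map h on the square B = [-π/2,π/2]², defined by h(x1,x2) = (x1 sin M/√(x1²+x2²), x2 sin M/√(x1²+x2²), cos M) with M = max(|x1|,|x2|) (and h(0,0) = (0,0,1)), is injective on the interior of B. -/
open Real

/-- The map `h` from the square `B = [-π/2, π/2]²` to the upper hemisphere. -/
noncomputable def zorichH (p : ℝ × ℝ) : ℝ × ℝ × ℝ :=
  if p = (0, 0) then (0, 0, 1)
  else
    (p.1 * Real.sin (max |p.1| |p.2|) / Real.sqrt (p.1 ^ 2 + p.2 ^ 2),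
     p.2 * Real.sin (max |p.1| |p.2|) / Real.sqrt (p.1 ^ 2 + p.2 ^ 2),
     Real.cos (max |p.1| |p.2|))

lemma zorich_cos_one {c d : ℝ} (hc : |c| < π / 2) (hd : |d| < π / 2)
    (h : Real.cos (max |c| |d|) = 1) : c = 0 ∧ d = 0 := by
  have h0 : (0 : ℝ) ≤ max |c| |d| := le_max_of_le_left (abs_nonneg c)
  have hpi : max |c| |d| ≤ π := by
    have := max_lt hc hd
    nlinarith [pi_pos]
  have hM0 : max |c| |d| = 0 :=
    Real.injOn_cos ⟨h0, hpi⟩ ⟨le_refl 0, pi_pos.le⟩ (by simpa using h)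
  constructor
  · exact abs_eq_zero.mp (le_antisymm (hM0 ▸ le_max_left |c| |d|) (abs_nonneg c))
  · exact abs_eq_zero.mp (le_antisymm (hM0 ▸ le_max_right |c| |d|) (abs_nonneg d))

theorem stmt2 :
    Set.InjOn zorichH (Set.Ioo (-(π / 2)) (π / 2) ×ˢ Set.Ioo (-(π / 2)) (π / 2)) := by
  rintro ⟨a, b⟩ hp ⟨c, d⟩ hq heq
  simp only [Set.mem_prod, Set.mem_Ioo] at hp hq
  obtain ⟨⟨ha1, ha2⟩, hb1, hb2⟩ := hp
  obtain ⟨⟨hc1, hc2⟩, hd1, hd2⟩ := hq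
  have habs_a : |a| < π / 2 := abs_lt.2 ⟨ha1, ha2⟩
  have habs_b : |b| < π / 2 := abs_lt.2 ⟨hb1, hb2⟩
  have habs_c : |c| < π / 2 := abs_lt.2 ⟨hc1, hc2⟩
  have habs_d : |d| < π / 2 := abs_lt.2 ⟨hd1, hd2⟩
  by_cases hP : ((a, b) : ℝ × ℝ) = (0, 0)
  · by_cases hQ : ((c, d) : ℝ × ℝ) = (0, 0)
    · rw [hP, hQ]
    · exfalso
      rw [zorichH, zorichH, if_pos hP, if_neg hQ] at heq
      have h3 : Real.cos (max |c| |d|) = 1 := by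
        have := congrArg (fun x : ℝ × ℝ × ℝ => x.2.2) heq
        simpa using this.symm
      obtain ⟨hc0, hd0⟩ := zorich_cos_one habs_c habs_d h3
      exact hQ (by simp [hc0, hd0])
  · by_cases hQ : ((c, d) : ℝ × ℝ) = (0, 0)
    · exfalso
      rw [zorichH, zorichH, if_neg hP, if_pos hQ] at heq
      have h3 : Real.cos (max |a| |b|) = 1 := by
        have := congrArg (fun x : ℝ × ℝ × ℝ => x.2.2) heq
        simpa using this
      obtain ⟨ha0, hb0⟩ := zorich_cos_one habs_a habs_b h3
      exact hP (by simp [ha0, hb0])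
    · rw [zorichH, zorichH, if_neg hP, if_neg hQ] at heq
      simp only [Prod.mk.injEq] at heq
      obtain ⟨h1, h2, h3⟩ := heq
      -- M equality
      have hMp0 : (0:ℝ) ≤ max |a| |b| := le_max_of_le_left (abs_nonneg a)
      have hMq0 : (0:ℝ) ≤ max |c| |d| := le_max_of_le_left (abs_nonneg c)
      have hMppi : max |a| |b| ≤ π := by nlinarith [max_lt habs_a habs_b, pi_pos]
      have hMqpi : max |c| |d| ≤ π := by nlinarith [max_lt habs_c habs_d, pi_pos]
      have hM : max |a| |b| = max |c| |d| :=
        Real.injOn_cos ⟨hMp0, hMppi⟩ ⟨hMq0, hMqpi⟩ h3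
      -- positivity
      have hab : a ≠ 0 ∨ b ≠ 0 := by
        by_contra h
        push_neg at h
        exact hP (by simp [h.1, h.2])
      have hMpos : 0 < max |a| |b| := by
        rcases hab with h | h
        · exact lt_max_of_lt_left (abs_pos.2 h)
        · exact lt_max_of_lt_right (abs_pos.2 h)
      have hsin : 0 < Real.sin (max |a| |b|) :=
        Real.sin_pos_of_pos_of_lt_pi hMpos (lt_of_le_of_lt (by
          nlinarith [max_lt habs_a habs_b]) (by linarith [pi_pos] : π/2 + 0 < π))
      set s := Real.sin (max |a| |b|) with hs
      have hnp : 0 < Real.sqrt (a ^ 2 + b ^ 2) := by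
        apply Real.sqrt_pos.2
        rcases hab with h | h <;> positivity
      have hcd : c ≠ 0 ∨ d ≠ 0 := by
        by_contra h
        push_neg at h
        exact hQ (by simp [h.1, h.2])
      have hnq : 0 < Real.sqrt (c ^ 2 + d ^ 2) := by
        apply Real.sqrt_pos.2
        rcases hcd with h | h <;> positivity
      set np := Real.sqrt (a ^ 2 + b ^ 2) with hnp'
      set nq := Real.sqrt (c ^ 2 + d ^ 2) with hnq'
      rw [← hM] at h1 h2
      have h1' : a * nq = c * np := by
        have key : (a * nq - c * np) * s = 0 := by
          field_simp at h1
          linarith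
        rcases mul_eq_zero.1 key with h | h
        · linarith
        · exact absurd h hsin.ne'
      have h2' : b * nq = d * np := by
        have key : (b * nq - d * np) * s = 0 := by
          field_simp at h2
          linarith
        rcases mul_eq_zero.1 key with h | h
        · linarith
        · exact absurd h hsin.ne'
      have habs1 : |a| * nq = |c| * np := by
        have := congrArg abs h1'
        rwa [abs_mul, abs_mul, abs_of_pos hnq, abs_of_pos hnp] at this
      have habs2 : |b| * nq = |d| * np := by
        have := congrArg abs h2'
        rwa [abs_mul, abs_mul, abs_of_pos hnq, abs_of_pos hnp] at this
      have hmaxeq : max |a| |b| * nq = max |c| |d| * np := by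
        rw [max_mul_of_nonneg _ _ hnq.le, max_mul_of_nonneg _ _ hnp.le,
          habs1, habs2]
      rw [← hM] at hmaxeq
      have hnpq : np = nq := (mul_left_cancel₀ hMpos.ne' hmaxeq.symm)
      rw [hnpq] at h1' h2'
      have : a = c := mul_right_cancel₀ hnq.ne' h1'
      have : b = d := mul_right_cancel₀ hnq.ne' h2'
      simp_all
end

section
/- Let η ∈ (0, π/4), ξ ∈ (0, η/3), and fix reals M, l, s. Suppose a ray from P = (p1,p2,p3) passes through a point A = (π/2 + Mπ, a2, a3) with a2 ∈ (π/2 + (l−1)π + η, π/2 + lπ − η), and suppose the direction of the ray has |Δx2| ≤ |Δx1| (i.e., angle at most π/4 with the x1-axis in the (x1,x2)-plane). If B = (b1,b2,b3) is a point on the ray with |b1 − (π/2 + Mπ)| = ξ, then b2 ∈ (π/2 + (l−1)π + ξ, π/2 + lπ − ξ). -/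
open Real

theorem stmt16 (η ξ M l : ℝ)
    (hη : η ∈ Set.Ioo 0 (π / 4)) (hξ : ξ ∈ Set.Ioo 0 (η / 3))
    (p1 p2 p3 a2 a3 : ℝ)
    (ha2 : a2 ∈ Set.Ioo (π / 2 + (l - 1) * π + η) (π / 2 + l * π - η))
    -- the direction of the ray makes an angle at most π/4 with the x1-axis
    (hslope : |a2 - p2| ≤ |(π / 2 + M * π) - p1|)
    (B : ℝ × ℝ × ℝ)
    -- B lies on the ray from P through A
    (hB : ∃ s : ℝ, 0 < s ∧
      B = (p1, p2, p3) + s • (((π / 2 + M * π, a2, a3) : ℝ × ℝ × ℝ) - (p1, p2, p3)))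
    (hB1 : |B.1 - (π / 2 + M * π)| = ξ) :
    B.2.1 ∈ Set.Ioo (π / 2 + (l - 1) * π + ξ) (π / 2 + l * π - ξ) := by
  obtain ⟨s, hs, hBeq⟩ := hB
  have h1 : B.1 = p1 + s * ((π / 2 + M * π) - p1) := by
    rw [hBeq]; simp [Prod.add_def, Prod.smul_def, mul_sub]
  have h2 : B.2.1 = p2 + s * (a2 - p2) := by
    rw [hBeq]; simp [Prod.add_def, Prod.smul_def, mul_sub]
  have key : |B.2.1 - a2| ≤ ξ := by
    have e1 : B.1 - (π / 2 + M * π) = (s - 1) * ((π / 2 + M * π) - p1) := by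
      rw [h1]; ring
    have e2 : B.2.1 - a2 = (s - 1) * (a2 - p2) := by rw [h2]; ring
    calc |B.2.1 - a2| = |s - 1| * |a2 - p2| := by rw [e2, abs_mul]
      _ ≤ |s - 1| * |(π / 2 + M * π) - p1| := by
          exact mul_le_mul_of_nonneg_left hslope (abs_nonneg _)
      _ = |B.1 - (π / 2 + M * π)| := by rw [e1, abs_mul]
      _ = ξ := hB1
  obtain ⟨hη0, _⟩ := hη
  obtain ⟨hξ0, hξη⟩ := hξ
  obtain ⟨ha2l, ha2r⟩ := ha2
  have habs := abs_le.mp key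
  constructor <;> [nlinarith [habs.1]; nlinarith [habs.2]]
end
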